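/- Let η ∈ (0, 1) and α₁, α₃ > 0, and define G_η(z) = 1 − (η√(1−z) − √((1−η²)z))² for z ∈ [0, 1] and K(z) = α₃ G_η(z) − α₁ z. Define u₀ = [α₁/α₃ − (2η² − 1) + √((α₁/α₃)² + 1 − 2(α₁/α₃)(2η² − 1))] / (2η√(1−η²)) and z₀ = 1/(1 + u₀²). Then z₀ ∈ (0, 1), z₀ is the unique point in (0, 1) satisfying α₃ G_η′(z) = α₁ (where G_η′ denotes the derivative of G_η), and K attains its maximum over [0, 1] at z₀. -/

import Mathlib

lemma phi_strictAnti : StrictAntiOn (fun z : ℝ => (1 - 2*z)/(2*(Real.sqrt z * Real.sqrt (1-z)))) (Set.Ioo 0 1) := by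
  intro z₁ h₁ z₂ h₂ hlt
  obtain ⟨h10, h11⟩ := h₁; obtain ⟨h20, h21⟩ := h₂
  have hA1 : 0 < Real.sqrt z₁ := Real.sqrt_pos.mpr h10
  have hA2 : 0 < Real.sqrt z₂ := Real.sqrt_pos.mpr h20
  have hB1 : 0 < Real.sqrt (1-z₁) := Real.sqrt_pos.mpr (by linarith)
  have hB2 : 0 < Real.sqrt (1-z₂) := Real.sqrt_pos.mpr (by linarith)
  have e1 : Real.sqrt z₁ ^ 2 = z₁ := Real.sq_sqrt h10.le
  have e2 : Real.sqrt z₂ ^ 2 = z₂ := Real.sq_sqrt h20.le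
  have f1 : Real.sqrt (1-z₁) ^ 2 = 1-z₁ := Real.sq_sqrt (by linarith)
  have f2 : Real.sqrt (1-z₂) ^ 2 = 1-z₂ := Real.sq_sqrt (by linarith)
  have hcross : Real.sqrt z₁ * Real.sqrt (1-z₂) < Real.sqrt z₂ * Real.sqrt (1-z₁) := by
    have hsq : (Real.sqrt z₁ * Real.sqrt (1-z₂))^2 < (Real.sqrt z₂ * Real.sqrt (1-z₁))^2 := by
      nlinarith
    exact lt_of_pow_lt_pow_left₀ 2 (by positivity) hsq
  simp only
  rw [div_lt_div_iff₀ (by positivity) (by positivity)]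
  nlinarith [mul_pos (sub_pos.mpr hcross) (mul_pos hB1 hB2),
    mul_pos (sub_pos.mpr hcross) (mul_pos hA1 hA2), e1, e2, f1, f2,
    mul_pos hA1 hB1, mul_pos hA2 hB2]

set_option maxHeartbeats 800000 in
/-- For `K(z) = α₃ G_η(z) − α₁ z`, the point
`z₀ = 1/(1+u₀²)` lies in `(0,1)`, is the unique point of `(0,1)` with
`α₃ G_η′(z) = α₁`, and `K` attains its maximum over `[0,1]` at `z₀`. -/
theorem stmt9 (η α₁ α₃ : ℝ) (hη0 : 0 < η) (hη1 : η < 1)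
    (hα₁ : 0 < α₁) (hα₃ : 0 < α₃)
    (G K : ℝ → ℝ)
    (hG : ∀ z, G z = 1 - (η * Real.sqrt (1 - z) - Real.sqrt ((1 - η ^ 2) * z)) ^ 2)
    (hK : ∀ z, K z = α₃ * G z - α₁ * z)
    (u₀ z₀ : ℝ)
    (hu₀ : u₀ = (α₁ / α₃ - (2 * η ^ 2 - 1) +
        Real.sqrt ((α₁ / α₃) ^ 2 + 1 - 2 * (α₁ / α₃) * (2 * η ^ 2 - 1))) /
        (2 * η * Real.sqrt (1 - η ^ 2)))
    (hz₀ : z₀ = 1 / (1 + u₀ ^ 2)) :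
    z₀ ∈ Set.Ioo (0 : ℝ) 1 ∧
    α₃ * deriv G z₀ = α₁ ∧
    (∀ z ∈ Set.Ioo (0 : ℝ) 1, α₃ * deriv G z = α₁ → z = z₀) ∧
    ∀ z ∈ Set.Icc (0 : ℝ) 1, K z ≤ K z₀ := by
  have hη2 : (0:ℝ) < 1 - η ^ 2 := by nlinarith
  have hsqpos : 0 < Real.sqrt (1 - η ^ 2) := Real.sqrt_pos.mpr hη2
  obtain ⟨c, hc⟩ : ∃ c : ℝ, c = 2 * η ^ 2 - 1 := ⟨_, rfl⟩
  obtain ⟨s, hs⟩ : ∃ s : ℝ, s = 2 * η * Real.sqrt (1 - η ^ 2) := ⟨_, rfl⟩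
  obtain ⟨a, ha⟩ : ∃ a : ℝ, a = α₁ / α₃ := ⟨_, rfl⟩
  rw [← hc, ← hs, ← ha] at hu₀
  have hspos : 0 < s := by rw [hs]; positivity
  obtain ⟨t, htd⟩ : ∃ t : ℝ, t = (a - c) / s := ⟨_, rfl⟩
  have hs2 : s ^ 2 = 4 * η ^ 2 * (1 - η ^ 2) := by
    rw [hs, mul_pow, mul_pow, Real.sq_sqrt hη2.le]; ring
  have hcs : c ^ 2 + s ^ 2 = 1 := by rw [hc, hs2]; ring
  have ht2 : s ^ 2 * t ^ 2 = (a - c) ^ 2 := by rw [htd]; field_simp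
  have hT : (0:ℝ) ≤ t ^ 2 + 1 := by positivity
  have h1sq : (s * Real.sqrt (t ^ 2 + 1)) ^ 2 = a ^ 2 + 1 - 2 * a * c := by
    rw [mul_pow, Real.sq_sqrt hT]
    linear_combination ht2 + hcs
  have hS : Real.sqrt (a ^ 2 + 1 - 2 * a * c) = s * Real.sqrt (t ^ 2 + 1) := by
    rw [← h1sq, Real.sqrt_sq (by positivity)]
  have hu : u₀ = t + Real.sqrt (t ^ 2 + 1) := by
    rw [hu₀, hS, htd]; field_simp
  have hSt2 : Real.sqrt (t ^ 2 + 1) ^ 2 = t ^ 2 + 1 := Real.sq_sqrt hT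
  have hupos : 0 < u₀ := by
    rw [hu]
    nlinarith [hSt2, Real.sqrt_nonneg (t ^ 2 + 1), sq_nonneg (t + Real.sqrt (t ^ 2 + 1))]
  have h1u : 0 < 1 + u₀ ^ 2 := by positivity
  have hz₀0 : 0 < z₀ := by rw [hz₀]; positivity
  have hz₀1 : z₀ < 1 := by rw [hz₀, div_lt_one h1u]; nlinarith
  have hz₀mem : z₀ ∈ Set.Ioo (0:ℝ) 1 := ⟨hz₀0, hz₀1⟩
  have hAB : Real.sqrt z₀ * Real.sqrt (1 - z₀) = u₀ / (1 + u₀ ^ 2) := by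
    rw [← Real.sqrt_mul hz₀0.le,
      show z₀ * (1 - z₀) = (u₀ / (1 + u₀ ^ 2)) ^ 2 by rw [hz₀]; field_simp; ring,
      Real.sqrt_sq (by positivity)]
  have hu2 : u₀ ^ 2 - 1 = 2 * t * u₀ := by
    rw [hu]; linear_combination hSt2
  have hphiz₀ : (1 - 2*z₀)/(2*(Real.sqrt z₀ * Real.sqrt (1 - z₀))) = t := by
    rw [hAB, hz₀, div_eq_iff (by positivity)]
    field_simp
    linear_combination hu2
  -- derivative of G
  have hGderiv : ∀ x ∈ Set.Ioo (0:ℝ) 1, HasDerivAt G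
      (c + s * ((1 - 2*x)/(2*(Real.sqrt x * Real.sqrt (1-x))))) x := by
    have key : ∀ z ∈ Set.Icc (0:ℝ) 1, G z = 1 - η^2 + c*z
        + s*(Real.sqrt z * Real.sqrt (1-z)) := by
      intro z hz
      obtain ⟨h0, h1⟩ := hz
      rw [hG z, Real.sqrt_mul (le_of_lt hη2), hc, hs]
      have e1 : Real.sqrt (1-z)^2 = 1-z := Real.sq_sqrt (by linarith)
      have e2 : Real.sqrt z^2 = z := Real.sq_sqrt h0
      have e3 : Real.sqrt (1-η^2)^2 = 1-η^2 := Real.sq_sqrt (le_of_lt hη2)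
      linear_combination (-(η^2)) * e1 + (-(Real.sqrt (1-η^2)^2)) * e2 + (-z) * e3
    intro x hx
    obtain ⟨hx0, hx1⟩ := hx
    have hA : 0 < Real.sqrt x := Real.sqrt_pos.mpr hx0
    have hB : 0 < Real.sqrt (1-x) := Real.sqrt_pos.mpr (by linarith)
    have e2 : Real.sqrt x^2 = x := Real.sq_sqrt hx0.le
    have e1 : Real.sqrt (1-x)^2 = 1-x := Real.sq_sqrt (by linarith)
    have h1 : HasDerivAt Real.sqrt (1/(2*Real.sqrt x)) x := Real.hasDerivAt_sqrt (ne_of_gt hx0)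
    have h2 : HasDerivAt (fun z : ℝ => Real.sqrt (1-z)) ((1/(2*Real.sqrt (1-x))) * (-1)) x :=
      (Real.hasDerivAt_sqrt (ne_of_gt (by linarith : (0:ℝ) < 1-x))).comp x ((hasDerivAt_id x).const_sub 1)
    have hF : HasDerivAt (fun z : ℝ => 1 - η^2 + c*z + s*(Real.sqrt z * Real.sqrt (1-z)))
        (c + s * ((1/(2*Real.sqrt x))*Real.sqrt (1-x) + Real.sqrt x * ((1/(2*Real.sqrt (1-x))) * (-1)))) x := by
      have := ((hasDerivAt_const x (1 - η^2)).add ((hasDerivAt_id x).const_mul c)).add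
        ((h1.mul h2).const_mul s)
      exact this.congr_deriv (by ring)
    have heq : G =ᶠ[nhds x] (fun z : ℝ => 1 - η^2 + c*z + s*(Real.sqrt z * Real.sqrt (1-z))) := by
      filter_upwards [Ioo_mem_nhds hx0 hx1] with z hz
      exact key z (Set.Ioo_subset_Icc_self hz)
    have hinner : (1/(2*Real.sqrt x))*Real.sqrt (1-x) + Real.sqrt x * ((1/(2*Real.sqrt (1-x))) * (-1))
        = (1 - 2*x)/(2*(Real.sqrt x * Real.sqrt (1-x))) := by
      field_simp
      linear_combination e1 - e2
    rw [← hinner]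
    exact hF.congr_of_eventuallyEq heq
  have hderivG_eq : ∀ x ∈ Set.Ioo (0:ℝ) 1,
      deriv G x = c + s * ((1 - 2*x)/(2*(Real.sqrt x * Real.sqrt (1-x)))) :=
    fun x hx => (hGderiv x hx).deriv
  have he : α₃ * (c + s * t) = α₁ := by
    rw [htd, ha]; field_simp; ring
  have part2 : α₃ * deriv G z₀ = α₁ := by
    rw [hderivG_eq z₀ hz₀mem, hphiz₀]; exact he
  refine ⟨hz₀mem, part2, ?_, ?_⟩
  · -- uniqueness
    intro z hz heq
    rw [hderivG_eq z hz] at heq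
    have h3 : α₃ * s * ((1 - 2*z)/(2*(Real.sqrt z * Real.sqrt (1-z)))) = α₃ * s * t := by
      linear_combination heq - he
    have h4 : (1 - 2*z)/(2*(Real.sqrt z * Real.sqrt (1-z))) = t :=
      mul_left_cancel₀ (by positivity) h3
    exact phi_strictAnti.injOn hz hz₀mem (by rw [h4, hphiz₀])
  · -- maximum
    have hGf : G = fun z => 1 - (η * Real.sqrt (1 - z) - Real.sqrt ((1 - η ^ 2) * z)) ^ 2 := funext hG
    have hKf : K = fun z => α₃ * G z - α₁ * z := funext hK
    have hGc : Continuous G := by rw [hGf]; fun_prop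
    have hKc : Continuous K := by
      rw [hKf]; exact (continuous_const.mul hGc).sub (continuous_const.mul continuous_id)
    have hKderiv : ∀ x ∈ Set.Ioo (0:ℝ) 1, HasDerivAt K
        (α₃ * s * ((1 - 2*x)/(2*(Real.sqrt x * Real.sqrt (1-x))) - t)) x := by
      intro x hx
      have hd := ((hGderiv x hx).const_mul α₃).sub ((hasDerivAt_id x).const_mul α₁)
      rw [hKf]
      exact hd.congr_deriv (by linear_combination he)
    have hmono : StrictMonoOn K (Set.Icc 0 z₀) := by
      apply strictMonoOn_of_deriv_pos (convex_Icc _ _) hKc.continuousOn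
      intro x hx
      rw [interior_Icc] at hx
      have hx01 : x ∈ Set.Ioo (0:ℝ) 1 := ⟨hx.1, hx.2.trans hz₀1⟩
      rw [(hKderiv x hx01).deriv]
      have hlt : (1 - 2*z₀)/(2*(Real.sqrt z₀ * Real.sqrt (1-z₀)))
          < (1 - 2*x)/(2*(Real.sqrt x * Real.sqrt (1-x))) := phi_strictAnti hx01 hz₀mem hx.2
      rw [hphiz₀] at hlt
      have : 0 < (1 - 2*x)/(2*(Real.sqrt x * Real.sqrt (1-x))) - t := by linarith
      positivity
    have hanti : StrictAntiOn K (Set.Icc z₀ 1) := by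
      apply strictAntiOn_of_deriv_neg (convex_Icc _ _) hKc.continuousOn
      intro x hx
      rw [interior_Icc] at hx
      have hx01 : x ∈ Set.Ioo (0:ℝ) 1 := ⟨hz₀0.trans hx.1, hx.2⟩
      rw [(hKderiv x hx01).deriv]
      have hlt : (1 - 2*x)/(2*(Real.sqrt x * Real.sqrt (1-x)))
          < (1 - 2*z₀)/(2*(Real.sqrt z₀ * Real.sqrt (1-z₀))) := phi_strictAnti hz₀mem hx01 hx.1
      rw [hphiz₀] at hlt
      have h5 : (1 - 2*x)/(2*(Real.sqrt x * Real.sqrt (1-x))) - t < 0 := by linarith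
      have h6 : 0 < α₃ * s := mul_pos hα₃ hspos
      nlinarith
    intro z hz
    rcases le_or_gt z z₀ with h | h
    · exact hmono.monotoneOn ⟨hz.1, h⟩ ⟨hz₀0.le, le_refl _⟩ h
    · exact hanti.antitoneOn ⟨le_refl _, hz₀1.le⟩ ⟨h.le, hz.2⟩ h.le
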